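/- Let G be an S_k-free graph (no induced star K_{1,k}) with no isolated vertices, and let A be an independent set in G with B = V(G) \ A. Then there is a coloring of B using at most k colors such that every vertex of A has some color appearing exactly once among its neighbors in B. -/

import Mathlib

open Finset

namespace CFAux

variable {V : Type*} [Fintype V] [DecidableEq V]

/-- choose a maximal subset `T ⊆ R` such that every `a ∈ U` has at most one
neighbor in `T`. -/
noncomputable def pickI (G : SimpleGraph V) [DecidableRel G.Adj] (U R : Finset V) : Finset V :=
  ((R.powerset.filter (fun T => ∀ a ∈ U, (G.neighborFinset a ∩ T).card ≤ 1)).exists_maximal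
    ⟨∅, by simp⟩).choose

lemma pickI_spec (G : SimpleGraph V) [DecidableRel G.Adj] (U R : Finset V) :
    pickI G U R ∈
      (R.powerset.filter (fun T => ∀ a ∈ U, (G.neighborFinset a ∩ T).card ≤ 1)) ∧
    ∀ x ∈ (R.powerset.filter (fun T => ∀ a ∈ U, (G.neighborFinset a ∩ T).card ≤ 1)),
      ¬ pickI G U R < x := by
  have h := ((R.powerset.filter
    (fun T => ∀ a ∈ U, (G.neighborFinset a ∩ T).card ≤ 1)).exists_maximal
    ⟨∅, by simp⟩).choose_spec
  exact ⟨h.1, fun x hx hlt => lt_irrefl _ (lt_of_lt_of_le hlt (h.2 hx hlt.le))⟩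

lemma pickI_subset (G : SimpleGraph V) [DecidableRel G.Adj] (U R : Finset V) :
    pickI G U R ⊆ R := by
  have h := (pickI_spec G U R).1
  simp only [mem_filter, mem_powerset] at h
  exact h.1

lemma pickI_card (G : SimpleGraph V) [DecidableRel G.Adj] (U R : Finset V) :
    ∀ a ∈ U, (G.neighborFinset a ∩ pickI G U R).card ≤ 1 := by
  have h := (pickI_spec G U R).1
  simp only [mem_filter, mem_powerset] at h
  exact h.2

lemma pickI_max (G : SimpleGraph V) [DecidableRel G.Adj] (U R : Finset V)
    {b : V} (hbR : b ∈ R) (hbI : b ∉ pickI G U R) :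
    ∃ a ∈ U, b ∈ G.neighborFinset a ∧ (G.neighborFinset a ∩ pickI G U R).card = 1 := by
  have hmax := (pickI_spec G U R).2 (insert b (pickI G U R))
  have hlt : pickI G U R < insert b (pickI G U R) :=
    Finset.ssubset_insert hbI
  have hnot : ¬ (insert b (pickI G U R) ∈
      (R.powerset.filter (fun T => ∀ a ∈ U, (G.neighborFinset a ∩ T).card ≤ 1))) :=
    fun hmem => hmax hmem hlt
  simp only [mem_filter, mem_powerset, not_and, not_forall, not_le] at hnot
  have hsub : insert b (pickI G U R) ⊆ R := insert_subset hbR (pickI_subset G U R)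
  obtain ⟨a, haU, hcard⟩ := hnot hsub
  have hbN : b ∈ G.neighborFinset a := by
    by_contra hb
    have : G.neighborFinset a ∩ insert b (pickI G U R) = G.neighborFinset a ∩ pickI G U R := by
      ext x
      simp only [mem_inter, mem_insert]
      constructor
      · rintro ⟨hx, hx' | hx'⟩
        · exact absurd (hx' ▸ hx) hb
        · exact ⟨hx, hx'⟩
      · rintro ⟨hx, hx'⟩; exact ⟨hx, Or.inr hx'⟩
    rw [this] at hcard
    exact absurd (pickI_card G U R a haU) (by omega)
  refine ⟨a, haU, hbN, ?_⟩
  have h1 : (G.neighborFinset a ∩ insert b (pickI G U R)).card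
      ≤ (G.neighborFinset a ∩ pickI G U R).card + 1 := by
    have : G.neighborFinset a ∩ insert b (pickI G U R)
        ⊆ insert b (G.neighborFinset a ∩ pickI G U R) := by
      intro x hx
      simp only [mem_inter, mem_insert] at hx ⊢
      rcases hx with ⟨hx1, hx2 | hx2⟩
      · exact Or.inl hx2
      · exact Or.inr ⟨hx1, hx2⟩
    calc (G.neighborFinset a ∩ insert b (pickI G U R)).card
        ≤ (insert b (G.neighborFinset a ∩ pickI G U R)).card := Finset.card_le_card this
      _ ≤ (G.neighborFinset a ∩ pickI G U R).card + 1 := Finset.card_insert_le _ _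
  have h2 := pickI_card G U R a haU
  omega

variable (G : SimpleGraph V) [DecidableRel G.Adj] (A : Finset V)

/-- the state after `j` rounds: unsatisfied vertices of `A`, and the remaining
(uncolored) part of `B = Aᶜ`. -/
noncomputable def stepUR : ℕ → Finset V × Finset V
  | 0 => (A, Aᶜ)
  | j + 1 =>
      let p := stepUR j
      let I := pickI G p.1 p.2
      (p.1.filter (fun a => ¬ (G.neighborFinset a ∩ I).card = 1), p.2 \ I)

noncomputable def Uset (j : ℕ) : Finset V := (stepUR G A j).1
noncomputable def Rset (j : ℕ) : Finset V := (stepUR G A j).2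
noncomputable def Iset (j : ℕ) : Finset V := pickI G (Uset G A j) (Rset G A j)

lemma Uset_succ (j : ℕ) :
    Uset G A (j + 1)
      = (Uset G A j).filter (fun a => ¬ (G.neighborFinset a ∩ Iset G A j).card = 1) := rfl

lemma Rset_succ (j : ℕ) : Rset G A (j + 1) = Rset G A j \ Iset G A j := rfl

lemma Uset_zero : Uset G A 0 = A := rfl

lemma Rset_zero : Rset G A 0 = Aᶜ := rfl

lemma Uset_succ_subset (j : ℕ) : Uset G A (j + 1) ⊆ Uset G A j := by
  rw [Uset_succ]; exact filter_subset _ _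

lemma Uset_antitone {m n : ℕ} (h : m ≤ n) : Uset G A n ⊆ Uset G A m := by
  induction n with
  | zero => simpa [Nat.le_zero.mp h]
  | succ n ih =>
      rcases Nat.lt_or_ge m (n+1) with h' | h'
      · exact (Uset_succ_subset G A n).trans (ih (Nat.lt_succ_iff.mp h'))
      · have : m = n + 1 := le_antisymm h h'
        subst this; exact subset_rfl

lemma Rset_succ_subset (j : ℕ) : Rset G A (j + 1) ⊆ Rset G A j := by
  rw [Rset_succ]; exact sdiff_subset

lemma Rset_antitone {m n : ℕ} (h : m ≤ n) : Rset G A n ⊆ Rset G A m := by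
  induction n with
  | zero => simpa [Nat.le_zero.mp h]
  | succ n ih =>
      rcases Nat.lt_or_ge m (n+1) with h' | h'
      · exact (Rset_succ_subset G A n).trans (ih (Nat.lt_succ_iff.mp h'))
      · have : m = n + 1 := le_antisymm h h'
        subst this; exact subset_rfl

lemma Uset_subset_A (j : ℕ) : Uset G A j ⊆ A :=
  Uset_antitone G A (Nat.zero_le j)

lemma Iset_subset (j : ℕ) : Iset G A j ⊆ Rset G A j :=
  pickI_subset G _ _

lemma Iset_disjoint {i j : ℕ} (hij : i < j) : Disjoint (Iset G A i) (Iset G A j) := by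
  have h1 : Iset G A j ⊆ Rset G A (i + 1) :=
    (Iset_subset G A j).trans (Rset_antitone G A hij)
  rw [Rset_succ] at h1
  exact Finset.disjoint_left.mpr fun x hxi hxj =>
    (Finset.mem_sdiff.mp (h1 hxj)).2 hxi

lemma Iset_not_mem_A {j : ℕ} {b : V} (hb : b ∈ Iset G A j) : b ∉ A := by
  have : b ∈ Rset G A 0 := Rset_antitone G A (Nat.zero_le j) (Iset_subset G A j hb)
  rw [Rset_zero, Finset.mem_compl] at this
  exact this

end CFAux

open CFAux in
/-- If `G` is `S_k`-free (no induced star `K_{1,k}`) with no isolated vertices and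
`A` is an independent set, then `B = V \ A` can be colored with `k` colors so that
every vertex of `A` has some color appearing exactly once among its neighbors (which
all lie in `B`). -/
theorem cf_coloring_outside_independent_set {V : Type*} [Fintype V] [DecidableEq V]
    (G : SimpleGraph V) [DecidableRel G.Adj] (k : ℕ)
    (hSk : ¬ ∃ (b : V) (S : Finset V), S.card = k ∧ b ∉ S ∧
      (∀ a ∈ S, G.Adj b a) ∧ (∀ a ∈ S, ∀ a' ∈ S, a ≠ a' → ¬ G.Adj a a'))
    (hiso : ∀ v : V, 0 < G.degree v)
    (A : Finset V)
    (hA : ∀ a ∈ A, ∀ a' ∈ A, ¬ G.Adj a a') :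
    ∃ c : V → Fin k,
      ∀ a ∈ A, ∃ col : Fin k, ∃! b : V, b ∉ A ∧ G.Adj a b ∧ c b = col := by
  classical
  rcases Nat.eq_zero_or_pos k with hk0 | hk
  · -- k = 0 : the hypothesis hSk forces V to be empty
    subst hk0
    have hVempty : IsEmpty V := by
      constructor
      intro v
      exact hSk ⟨v, ∅, by simp⟩
    exact ⟨fun v => isEmptyElim v, fun a _ => isEmptyElim a⟩
  -- k ≥ 1
  have hklt : k - 1 < k := Nat.sub_lt hk one_pos
  -- Every a ∈ A eventually leaves the unsatisfied set before round k-1.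
  have hUempty : Uset G A (k - 1) = ∅ := by
    by_contra hne
    obtain ⟨a, ha⟩ := Finset.nonempty_iff_ne_empty.mpr hne
    have haA : a ∈ A := Uset_subset_A G A _ ha
    have haU : ∀ j ≤ k - 1, a ∈ Uset G A j := fun j hj => Uset_antitone G A hj ha
    have hcard0 : ∀ j < k - 1, G.neighborFinset a ∩ Iset G A j = ∅ := by
      intro j hj
      have h1 : a ∈ Uset G A (j + 1) := haU (j + 1) hj
      rw [Uset_succ, mem_filter] at h1
      have h2 : (G.neighborFinset a ∩ Iset G A j).card ≤ 1 :=
        pickI_card G _ _ a (haU j (le_of_lt hj))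
      have h3 := h1.2
      rw [← Finset.card_eq_zero]
      omega
    have hNbA : G.neighborFinset a ⊆ Rset G A 0 := by
      intro x hx
      rw [Rset_zero, Finset.mem_compl]
      intro hxA
      exact hA a haA x hxA ((SimpleGraph.mem_neighborFinset G a x).mp hx)
    have hNbR : ∀ j ≤ k - 1, G.neighborFinset a ⊆ Rset G A j := by
      intro j
      induction j with
      | zero => intro _; exact hNbA
      | succ j ih =>
          intro hj
          rw [Rset_succ]
          intro x hx
          rw [Finset.mem_sdiff]
          refine ⟨ih (by omega) hx, ?_⟩
          intro hxI
          have : x ∈ G.neighborFinset a ∩ Iset G A j := Finset.mem_inter.mpr ⟨hx, hxI⟩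
          rw [hcard0 j (by omega)] at this
          exact absurd this (Finset.notMem_empty x)
    obtain ⟨b, hb⟩ : (G.neighborFinset a).Nonempty := by
      rw [← Finset.card_pos]
      exact hiso a
    -- for each round j < k-1 there is a distinct vertex of A adjacent to b that
    -- got satisfied at round j
    have key : ∀ j : ℕ, ∃ a' : V, j < k - 1 →
        a' ∈ Uset G A j ∧ a' ∉ Uset G A (j + 1) ∧ b ∈ G.neighborFinset a' := by
      intro j
      by_cases hj : j < k - 1
      · have hbR : b ∈ Rset G A j := hNbR j (le_of_lt hj) hb
        have hbI : b ∉ Iset G A j := by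
          intro hbI
          have : b ∈ G.neighborFinset a ∩ Iset G A j := Finset.mem_inter.mpr ⟨hb, hbI⟩
          rw [hcard0 j hj] at this
          exact absurd this (Finset.notMem_empty b)
        obtain ⟨a', ha'U, hba', hcard1⟩ := pickI_max G (Uset G A j) (Rset G A j) hbR hbI
        refine ⟨a', fun _ => ⟨ha'U, ?_, hba'⟩⟩
        rw [Uset_succ, mem_filter]
        push_neg
        intro _
        exact hcard1
      · exact ⟨a, fun h => absurd h hj⟩
    choose f hf using key
    have hfU : ∀ j < k - 1, f j ∈ Uset G A j := fun j hj => (hf j hj).1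
    have hfnU : ∀ j < k - 1, f j ∉ Uset G A (j + 1) := fun j hj => (hf j hj).2.1
    have hfb : ∀ j < k - 1, b ∈ G.neighborFinset (f j) := fun j hj => (hf j hj).2.2
    have hfA : ∀ j < k - 1, f j ∈ A := fun j hj => Uset_subset_A G A j (hfU j hj)
    have hfa : ∀ j < k - 1, f j ≠ a := by
      intro j hj heq
      exact hfnU j hj (heq ▸ haU (j + 1) hj)
    have hinj : Set.InjOn f ↑(Finset.range (k - 1)) := by
      intro i hi j hj hij
      simp only [Finset.coe_range, Set.mem_Iio] at hi hj
      by_contra hne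
      rcases Nat.lt_or_ge i j with h | h
      · exact hfnU i hi (by rw [hij]; exact Uset_antitone G A h (hfU j hj))
      · have h' : j < i := by omega
        exact hfnU j hj (by rw [← hij]; exact Uset_antitone G A h' (hfU i hi))
    set S : Finset V := insert a ((Finset.range (k - 1)).image f) with hS
    have haS : a ∉ (Finset.range (k - 1)).image f := by
      intro haim
      obtain ⟨j, hjr, hje⟩ := Finset.mem_image.mp haim
      exact hfa j (Finset.mem_range.mp hjr) hje
    have hScard : S.card = k := by
      rw [hS, Finset.card_insert_of_notMem haS, Finset.card_image_of_injOn hinj,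
        Finset.card_range]
      omega
    have hSsubA : S ⊆ A := by
      intro x hx
      rw [hS, Finset.mem_insert] at hx
      rcases hx with rfl | hx
      · exact haA
      · obtain ⟨j, hjr, rfl⟩ := Finset.mem_image.mp hx
        exact hfA j (Finset.mem_range.mp hjr)
    have hbA : b ∉ A := by
      have : b ∈ Rset G A 0 := hNbA hb
      rw [Rset_zero, Finset.mem_compl] at this
      exact this
    refine hSk ⟨b, S, hScard, fun hbS => hbA (hSsubA hbS), ?_, ?_⟩
    · intro x hx
      rw [hS, Finset.mem_insert] at hx
      rcases hx with hxa | hx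
      · rw [hxa]; exact ((SimpleGraph.mem_neighborFinset G a b).mp hb).symm
      · obtain ⟨j, hjr, rfl⟩ := Finset.mem_image.mp hx
        exact ((SimpleGraph.mem_neighborFinset G _ b).mp (hfb j (Finset.mem_range.mp hjr))).symm
    · intro x hx y hy _
      exact hA x (hSsubA hx) y (hSsubA hy)
  -- define the coloring
  refine ⟨fun b => if h : ∃ j, j < k - 1 ∧ b ∈ Iset G A j
      then ⟨h.choose, lt_trans h.choose_spec.1 hklt⟩ else ⟨k - 1, hklt⟩, ?_⟩
  intro a haA
  -- find the round where a was satisfied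
  have htrans : ∀ n : ℕ, a ∉ Uset G A n →
      ∃ j, j < n ∧ a ∈ Uset G A j ∧ a ∉ Uset G A (j + 1) := by
    intro n
    induction n with
    | zero => intro h; exact absurd (by rwa [Uset_zero]) h
    | succ n ih =>
        intro h
        by_cases h' : a ∈ Uset G A n
        · exact ⟨n, Nat.lt_succ_self n, h', h⟩
        · obtain ⟨j, hj, h1, h2⟩ := ih h'
          exact ⟨j, by omega, h1, h2⟩
  obtain ⟨j, hjk, hjU, hjnU⟩ := htrans (k - 1) (by rw [hUempty]; exact Finset.notMem_empty a)
  have hcard1 : (G.neighborFinset a ∩ Iset G A j).card = 1 := by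
    rw [Uset_succ, mem_filter] at hjnU
    push_neg at hjnU
    exact hjnU hjU
  obtain ⟨b₀, hb₀⟩ := Finset.card_eq_one.mp hcard1
  have hb₀N : b₀ ∈ G.neighborFinset a := by
    have : b₀ ∈ G.neighborFinset a ∩ Iset G A j := hb₀ ▸ Finset.mem_singleton_self b₀
    exact (Finset.mem_inter.mp this).1
  have hb₀I : b₀ ∈ Iset G A j := by
    have : b₀ ∈ G.neighborFinset a ∩ Iset G A j := hb₀ ▸ Finset.mem_singleton_self b₀
    exact (Finset.mem_inter.mp this).2
  -- a key fact: membership in Iset j determines the color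
  have hcol : ∀ x : V, x ∈ Iset G A j →
      (if h : ∃ j', j' < k - 1 ∧ x ∈ Iset G A j'
        then (⟨h.choose, lt_trans h.choose_spec.1 hklt⟩ : Fin k) else ⟨k - 1, hklt⟩)
        = ⟨j, lt_trans hjk hklt⟩ := by
    intro x hx
    have hex : ∃ j', j' < k - 1 ∧ x ∈ Iset G A j' := ⟨j, hjk, hx⟩
    rw [dif_pos hex]
    have hspec := hex.choose_spec
    have : hex.choose = j := by
      by_contra hne
      rcases Nat.lt_or_ge hex.choose j with h | h
      · exact (Finset.disjoint_left.mp (Iset_disjoint G A h) hspec.2) hx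
      · have h' : j < hex.choose := by omega
        exact (Finset.disjoint_left.mp (Iset_disjoint G A h') hx) hspec.2
    exact Fin.ext this
  have hcol' : ∀ x : V,
      (if h : ∃ j', j' < k - 1 ∧ x ∈ Iset G A j'
        then (⟨h.choose, lt_trans h.choose_spec.1 hklt⟩ : Fin k) else ⟨k - 1, hklt⟩)
        = ⟨j, lt_trans hjk hklt⟩ → x ∈ Iset G A j := by
    intro x hx
    by_cases hex : ∃ j', j' < k - 1 ∧ x ∈ Iset G A j'
    · rw [dif_pos hex] at hx
      have hspec := hex.choose_spec
      have : hex.choose = j := congrArg Fin.val hx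
      exact this ▸ hspec.2
    · rw [dif_neg hex] at hx
      have : k - 1 = j := congrArg Fin.val hx
      omega
  refine ⟨⟨j, lt_trans hjk hklt⟩, b₀, ⟨Iset_not_mem_A G A hb₀I,
    (SimpleGraph.mem_neighborFinset G a b₀).mp hb₀N, hcol b₀ hb₀I⟩, ?_⟩
  rintro x ⟨_, hxadj, hxc⟩
  have hxI : x ∈ Iset G A j := hcol' x hxc
  have hxN : x ∈ G.neighborFinset a := (SimpleGraph.mem_neighborFinset G a x).mpr hxadj
  have : x ∈ G.neighborFinset a ∩ Iset G A j := Finset.mem_inter.mpr ⟨hxN, hxI⟩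
  rw [hb₀] at this
  exact Finset.mem_singleton.mp this
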